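/- With notation as in the gluing construction, every integer strictly larger than k_1·F_A + k_2·F_B + k_1·k_2 belongs to the semigroup ⟨C⟩ generated by k_1A ∪ k_2B. -/

import Mathlib

/-- The numerical semigroup (additive submonoid of ℕ) generated by a set `A`. -/
def NS (A : Set ℕ) : AddSubmonoid ℕ := AddSubmonoid.closure A

/-- `F` is the Frobenius number of `S`: `F ∉ S` and every larger integer lies in `S`. -/
def IsFrobenius (S : AddSubmonoid ℕ) (F : ℕ) : Prop :=
  F ∉ S ∧ ∀ m : ℕ, F < m → m ∈ S

/-- The generating set `k₁A ∪ k₂B` of the gluing. -/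
def glueGens (A B : Set ℕ) (k1 k2 : ℕ) : Set ℕ :=
  (fun a => k1 * a) '' A ∪ (fun b => k2 * b) '' B

lemma mul_mem_NS_image {A : Set ℕ} {x : ℕ} (k : ℕ) (hx : x ∈ NS A) :
    k * x ∈ NS ((fun a => k * a) '' A) := by
  unfold NS at *
  induction hx using AddSubmonoid.closure_induction with
  | mem a ha => exact AddSubmonoid.subset_closure ⟨a, ha, rfl⟩
  | zero => simpa using AddSubmonoid.zero_mem _
  | add a b _ _ ha hb => rw [mul_add]; exact AddSubmonoid.add_mem _ ha hb

/-- Every integer strictly larger than `k₁F_A + k₂F_B + k₁k₂` is in the gluing semigroup. -/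
theorem glue_gt_frobenius_mem (A B : Set ℕ) (FA FB k1 k2 : ℕ)
    (hFA : IsFrobenius (NS A) FA) (hFB : IsFrobenius (NS B) FB)
    (hk1B : k1 ∈ NS B) (hk2A : k2 ∈ NS A)
    (hcop : Nat.Coprime k1 k2) :
    ∀ m : ℕ, k1 * FA + k2 * FB + k1 * k2 < m → m ∈ NS (glueGens A B k1 k2) := by
  intro m hm
  -- find x, y with m = k1*x + k2*y, x ∈ NS A, y ∈ NS B
  have key : ∃ x y : ℕ, m = k1 * x + k2 * y ∧ x ∈ NS A ∧ y ∈ NS B := by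
    rcases Nat.eq_zero_or_pos k2 with hk2 | hk2
    · subst hk2
      have hk1 : k1 = 1 := by simpa [Nat.Coprime] using hcop
      subst hk1
      refine ⟨m, 0, by ring, hFA.2 m ?_, AddSubmonoid.zero_mem _⟩
      simpa using hm
    · haveI : NeZero k2 := ⟨hk2.ne'⟩
      set j : ℕ := (((m : ZMod k2) - (k1 * (FA + 1) : ℕ)) * (k1 : ZMod k2)⁻¹).val with hj
      have hjlt : j < k2 := ZMod.val_lt _
      set x : ℕ := FA + 1 + j with hxdef
      have hxle : x ≤ FA + k2 := by omega
      have hk1x : k1 * x ≤ k1 * FA + k1 * k2 := by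
        calc k1 * x ≤ k1 * (FA + k2) := Nat.mul_le_mul_left _ hxle
        _ = k1 * FA + k1 * k2 := by ring
      have hxm : k1 * x < m := by omega
      have hdvd : k2 ∣ m - k1 * x := by
        rw [← ZMod.natCast_eq_zero_iff]
        have hcast : ((m - k1 * x : ℕ) : ZMod k2) = (m : ZMod k2) - (k1 * x : ℕ) := by
          push_cast [Nat.cast_sub hxm.le]; ring
        rw [hcast]
        have hval : ((j : ℕ) : ZMod k2) =
            ((m : ZMod k2) - (k1 * (FA + 1) : ℕ)) * (k1 : ZMod k2)⁻¹ := by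
          rw [hj, ZMod.natCast_zmod_val]
        have hinv : (k1 : ZMod k2) * (k1 : ZMod k2)⁻¹ = 1 :=
          ZMod.coe_mul_inv_eq_one k1 hcop
        have : ((k1 * x : ℕ) : ZMod k2) = (m : ZMod k2) := by
          push_cast [hxdef]
          push_cast at hval
          rw [mul_add, hval]
          linear_combination ((m : ZMod k2) - ((FA : ZMod k2) + 1) * k1) * hinv
        rw [this]; ring
      obtain ⟨y, hy⟩ := hdvd
      have hmy : m = k1 * x + k2 * y := by omega
      have hyFB : FB < y := by
        have : k2 * FB < k2 * y := by omega
        exact lt_of_mul_lt_mul_left this (Nat.zero_le _)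
      exact ⟨x, y, hmy, hFA.2 x (by omega), hFB.2 y hyFB⟩
  obtain ⟨x, y, hm', hx, hy⟩ := key
  rw [hm']
  refine AddSubmonoid.add_mem _ ?_ ?_
  · exact AddSubmonoid.closure_mono Set.subset_union_left (mul_mem_NS_image k1 hx)
  · exact AddSubmonoid.closure_mono Set.subset_union_right (mul_mem_NS_image k2 hy)
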